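/- Let δ and ε ≠ 0 be real constants and let x₁ be a twice continuously differentiable real function on a nonempty open interval I such that for every t ∈ I: Q(t) := δ + x₁(t)² − x₁'(t)² > 0, 𝔰(t) := 1 − ε²x₁'(t)² ≠ 0, and x₁'(t) ≠ 0. Then x₁ satisfies the BH-minimal equation (x₁x₁'' + (x₁')² − 2x₁² − δ)·Φ(𝔰)/Q + 2ε²x₁x₁''·Φ'(𝔰) = 0 at every t ∈ I if and only if the function t ↦ x₁(t)·√(Q(t))·Φ(𝔰(t)) is constant on I (the first integral of the BH-minimal surface equation, with constant value the energy E). -/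

import Mathlib

open Set

/-- The volume-ratio function of the Busemann–Hausdorff volume form in dimension `n = 2`. -/
noncomputable def PhiBH (s : ℝ) : ℝ := (3 * s - 2) / s ^ 2

/-- The derivative of `PhiBH`. -/
noncomputable def PhiBH' (s : ℝ) : ℝ := (4 - 3 * s) / s ^ 3

lemma hasDerivAt_PhiBH {s : ℝ} (hs : s ≠ 0) : HasDerivAt PhiBH (PhiBH' s) s := by
  have hp : HasDerivAt (fun s : ℝ => s ^ 2) (2 * s) s := by
    simpa using hasDerivAt_pow 2 s
  have h := (((hasDerivAt_id s).const_mul 3).sub_const 2).div hp (pow_ne_zero 2 hs)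
  simp only [id_eq, mul_one] at h
  have hPhi : PhiBH = fun s : ℝ => (3 * s - 2) / s ^ 2 := rfl
  rw [hPhi]
  refine h.congr_deriv ?_
  unfold PhiBH'
  field_simp
  ring

lemma alg (S P P' u u' u'' ε δ : ℝ) (hS : S ^ 2 = δ + u ^ 2 - u' ^ 2) (hSne : S ≠ 0) :
    (u' * S + u * ((2 * u * u' - 2 * u' * u'') / (2 * S))) * P +
      u * S * (P' * -(ε ^ 2 * (2 * u' * u''))) =
    -(u' * S * ((u * u'' + u' ^ 2 - 2 * u ^ 2 - δ) * P / (δ + u ^ 2 - u' ^ 2) +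
        2 * ε ^ 2 * u * u'' * P')) := by
  rw [← hS]
  field_simp
  linear_combination (u' * P) * hS

lemma key (δ ε : ℝ) (x₁ : ℝ → ℝ) (t : ℝ)
    (hx : HasDerivAt x₁ (deriv x₁ t) t)
    (hx' : HasDerivAt (deriv x₁) (deriv (deriv x₁) t) t)
    (hQ : 0 < δ + x₁ t ^ 2 - deriv x₁ t ^ 2)
    (hs : 1 - ε ^ 2 * deriv x₁ t ^ 2 ≠ 0) :
    HasDerivAt (fun t => x₁ t * Real.sqrt (δ + x₁ t ^ 2 - deriv x₁ t ^ 2) *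
        PhiBH (1 - ε ^ 2 * deriv x₁ t ^ 2))
      (-(deriv x₁ t * Real.sqrt (δ + x₁ t ^ 2 - deriv x₁ t ^ 2) *
        ((x₁ t * deriv (deriv x₁) t + deriv x₁ t ^ 2 - 2 * x₁ t ^ 2 - δ) *
            PhiBH (1 - ε ^ 2 * deriv x₁ t ^ 2) / (δ + x₁ t ^ 2 - deriv x₁ t ^ 2) +
          2 * ε ^ 2 * x₁ t * deriv (deriv x₁) t * PhiBH' (1 - ε ^ 2 * deriv x₁ t ^ 2)))) t := by
  have hQ' : δ + x₁ t ^ 2 - deriv x₁ t ^ 2 ≠ 0 := ne_of_gt hQ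
  have hQfun : HasDerivAt (fun t => δ + x₁ t ^ 2 - deriv x₁ t ^ 2)
      (2 * x₁ t * deriv x₁ t - 2 * deriv x₁ t * deriv (deriv x₁) t) t := by
    have := ((hx.pow 2).const_add δ).sub (hx'.pow 2)
    exact this.congr_deriv (by ring)
  have hsqrt : HasDerivAt (fun t => Real.sqrt (δ + x₁ t ^ 2 - deriv x₁ t ^ 2))
      ((2 * x₁ t * deriv x₁ t - 2 * deriv x₁ t * deriv (deriv x₁) t) /
        (2 * Real.sqrt (δ + x₁ t ^ 2 - deriv x₁ t ^ 2))) t :=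
    hQfun.sqrt hQ'
  have hsfun : HasDerivAt (fun t => 1 - ε ^ 2 * deriv x₁ t ^ 2)
      (-(ε ^ 2 * (2 * deriv x₁ t * deriv (deriv x₁) t))) t := by
    have := ((hx'.pow 2).const_mul (ε ^ 2)).const_sub 1
    exact this.congr_deriv (by ring)
  have hphi : HasDerivAt (fun t => PhiBH (1 - ε ^ 2 * deriv x₁ t ^ 2))
      (PhiBH' (1 - ε ^ 2 * deriv x₁ t ^ 2) *
        -(ε ^ 2 * (2 * deriv x₁ t * deriv (deriv x₁) t))) t :=
    by have := (hasDerivAt_PhiBH hs).comp t hsfun; exact this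
  have h := (hx.mul hsqrt).mul hphi
  refine h.congr_deriv ?_
  exact (alg (Real.sqrt (δ + x₁ t ^ 2 - deriv x₁ t ^ 2))
    (PhiBH (1 - ε ^ 2 * deriv x₁ t ^ 2)) (PhiBH' (1 - ε ^ 2 * deriv x₁ t ^ 2))
    (x₁ t) (deriv x₁ t) (deriv (deriv x₁) t) ε δ
    (Real.sq_sqrt hQ.le) (Real.sqrt_pos.2 hQ).ne')

/-- The BH-minimal equation for rotational surfaces has the first integral
`x₁ · √(δ + x₁² − x₁'²) · Φ(1 − ε²x₁'²) = E`. -/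
theorem stmt_0 (δ ε a b : ℝ) (hε : ε ≠ 0) (hab : a < b) (x₁ : ℝ → ℝ)
    (hx₁ : ContDiffOn ℝ 2 x₁ (Ioo a b))
    (hQ : ∀ t ∈ Ioo a b, 0 < δ + x₁ t ^ 2 - deriv x₁ t ^ 2)
    (hs : ∀ t ∈ Ioo a b, 1 - ε ^ 2 * deriv x₁ t ^ 2 ≠ 0)
    (hd : ∀ t ∈ Ioo a b, deriv x₁ t ≠ 0) :
    (∀ t ∈ Ioo a b,
        (x₁ t * deriv (deriv x₁) t + deriv x₁ t ^ 2 - 2 * x₁ t ^ 2 - δ) *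
            PhiBH (1 - ε ^ 2 * deriv x₁ t ^ 2) / (δ + x₁ t ^ 2 - deriv x₁ t ^ 2) +
          2 * ε ^ 2 * x₁ t * deriv (deriv x₁) t * PhiBH' (1 - ε ^ 2 * deriv x₁ t ^ 2) = 0) ↔
      ∃ E : ℝ, ∀ t ∈ Ioo a b,
        x₁ t * Real.sqrt (δ + x₁ t ^ 2 - deriv x₁ t ^ 2) *
          PhiBH (1 - ε ^ 2 * deriv x₁ t ^ 2) = E := by
  set F : ℝ → ℝ := fun t => x₁ t * Real.sqrt (δ + x₁ t ^ 2 - deriv x₁ t ^ 2) *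
      PhiBH (1 - ε ^ 2 * deriv x₁ t ^ 2) with hF
  have hx : ∀ t ∈ Ioo a b, HasDerivAt x₁ (deriv x₁ t) t := fun t ht =>
    ((hx₁.differentiableOn (by norm_num)).differentiableAt
      (isOpen_Ioo.mem_nhds ht)).hasDerivAt
  have hx' : ∀ t ∈ Ioo a b, HasDerivAt (deriv x₁) (deriv (deriv x₁) t) t := fun t ht =>
    (((hx₁.deriv_of_isOpen (m := 1) isOpen_Ioo (by norm_num)).differentiableOn
      one_ne_zero).differentiableAt (isOpen_Ioo.mem_nhds ht)).hasDerivAt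
  have hkey : ∀ t ∈ Ioo a b, HasDerivAt F
      (-(deriv x₁ t * Real.sqrt (δ + x₁ t ^ 2 - deriv x₁ t ^ 2) *
        ((x₁ t * deriv (deriv x₁) t + deriv x₁ t ^ 2 - 2 * x₁ t ^ 2 - δ) *
            PhiBH (1 - ε ^ 2 * deriv x₁ t ^ 2) / (δ + x₁ t ^ 2 - deriv x₁ t ^ 2) +
          2 * ε ^ 2 * x₁ t * deriv (deriv x₁) t * PhiBH' (1 - ε ^ 2 * deriv x₁ t ^ 2)))) t :=
    fun t ht => key δ ε x₁ t (hx t ht) (hx' t ht) (hQ t ht) (hs t ht)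
  constructor
  · intro h
    have ht₀ : (a + b) / 2 ∈ Ioo a b := ⟨by linarith, by linarith⟩
    refine ⟨F ((a + b) / 2), fun t ht => ?_⟩
    have hder : ∀ s ∈ Ioo a b, fderivWithin ℝ F (Ioo a b) s = 0 := by
      intro s hsmem
      have h0 : HasDerivAt F 0 s := by
        have := hkey s hsmem
        rwa [h s hsmem, mul_zero, neg_zero] at this
      rw [fderivWithin_of_isOpen isOpen_Ioo hsmem, h0.hasFDerivAt.fderiv]
      ext
      simp
    exact (convex_Ioo a b).is_const_of_fderivWithin_eq_zero
      (fun s hsmem => ((hkey s hsmem).differentiableAt.differentiableWithinAt))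
      hder ht ht₀
  · rintro ⟨E, hE⟩ t ht
    have h0 : HasDerivAt F 0 t := by
      have : F =ᶠ[nhds t] fun _ => E := by
        filter_upwards [isOpen_Ioo.mem_nhds ht] with s hsmem using hE s hsmem
      exact (hasDerivAt_const t E).congr_of_eventuallyEq this
    have huniq := (hkey t ht).unique h0
    rw [neg_eq_zero, mul_eq_zero] at huniq
    rcases huniq with h | h
    · exact absurd h (mul_ne_zero (hd t ht) (Real.sqrt_pos.2 (hQ t ht)).ne')
    · exact h
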